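/- arXiv:2203.15372 — 2 statements merged into one kernel-verified Lean document; each statement's English description precedes it below -/
import Mathlib

section
/- Let X = {x_n}_{n≥1} be a Riesz sequence in a Hilbert space H and let V be an orthogonalizer of X, i.e., a bounded invertible linear operator on the closed linear span of X such that {Vx_n} is an orthonormal family. If V has the form U + K with U unitary and K compact, then lim_{n→∞} ‖x_n‖ = 1. -/
noncomputable section

open Complex Metric Set Filter Submodule Finset MeasureTheory
open scoped InnerProductSpace ENNReal Topology Classical

/-- The open unit disc in `ℂ`. -/
def uDisc : Set ℂ := Metric.ball 0 1

/-- The Hardy space `H²`, realized as the Hilbert space `ℓ²(ℕ)` of Taylor coefficients. -/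
abbrev H2 : Type := lp (fun _ : ℕ => ℂ) 2

/-- The analytic function on the unit disc associated with an element of `H²`. -/
def H2fun (f : H2) (z : ℂ) : ℂ := ∑' n : ℕ, f n * z ^ n

/-- Complex conjugation. -/
def conjC (z : ℂ) : ℂ := (starRingEnd ℂ) z

/-- The Möbius transform `τ_μ(z) = (z - μ)/(1 - conj μ · z)`. -/
def mobius (μ z : ℂ) : ℂ := (z - μ) / (1 - conjC μ * z)

/-- The Blaschke factor `b_λ = (-λ/|λ|)·τ_λ` (with `b_0(z) = z`). -/
def blaschkeFactor (l z : ℂ) : ℂ := if l = 0 then z else (-l / (‖l‖ : ℂ)) * mobius l z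

/-- The Blaschke product with zero set `Λ`. -/
def blaschkeProd (Λ : ℕ → ℂ) (z : ℂ) : ℂ := ∏' n, blaschkeFactor (Λ n) z

/-- A sequence of distinct points of the unit disc satisfying the Blaschke condition (B). -/
def BlaschkeSeq (Λ : ℕ → ℂ) : Prop :=
  (∀ n, Λ n ∈ uDisc) ∧ Function.Injective Λ ∧ Summable (fun n => 1 - ‖Λ n‖)

/-- A sequence of distinct points of the unit disc satisfying the Carleson condition (C):
`inf_n ∏_{m ≠ n} |τ_{λ_m}(λ_n)| > 0` (the infinite product being the infimum of its
finite partial products, all factors lying in `[0,1]`). -/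
def CarlesonSeq (Λ : ℕ → ℂ) : Prop :=
  (∀ n, Λ n ∈ uDisc) ∧ Function.Injective Λ ∧
    ∃ δ : ℝ, 0 < δ ∧ ∀ n : ℕ, ∀ F : Finset ℕ, δ ≤ ∏ m ∈ F.erase n, ‖mobius (Λ m) (Λ n)‖

/-- Membership in the closed unit ball `𝓑` of `H^∞`. -/
def MemBallHinf (h : ℂ → ℂ) : Prop :=
  DifferentiableOn ℂ h uDisc ∧ ∀ z ∈ uDisc, ‖h z‖ ≤ 1

/-- `θ` is an inner function: it is analytic and bounded by one on the unit disc, and its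
radial limits have modulus one at almost every point of the unit circle. -/
def InnerFunction (θ : ℂ → ℂ) : Prop :=
  DifferentiableOn ℂ θ uDisc ∧ (∀ z ∈ uDisc, ‖θ z‖ ≤ 1) ∧
    ∀ᵐ (t : ℝ) ∂(volume.restrict (Set.Ioc (0:ℝ) (2 * Real.pi))),
      Tendsto (fun r : ℝ => ‖θ ((r : ℂ) * Complex.exp ((t : ℂ) * Complex.I))‖)
        (nhdsWithin 1 (Set.Iio 1)) (nhds 1)

/-- `θ` is a finite Blaschke product. -/
def IsFiniteBlaschke (θ : ℂ → ℂ) : Prop :=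
  ∃ (c : ℂ) (N : ℕ) (a : Fin N → ℂ), ‖c‖ = 1 ∧ (∀ i, a i ∈ uDisc) ∧
    ∀ z ∈ uDisc, θ z = c * ∏ i, mobius (a i) z

/-- The Schur–Nevanlinna functions of `(Λ, θ)`:
`θ_0 = θ`, `θ_{n+1} = (τ_{γ_n} ∘ θ_n)/τ_{λ_n}` where `γ_n = θ_n(λ_n)`. -/
def SNfun (Λ : ℕ → ℂ) (θ : ℂ → ℂ) : ℕ → ℂ → ℂ
  | 0 => θ
  | n + 1 => fun z => mobius (SNfun Λ θ n (Λ n)) (SNfun Λ θ n z) / mobius (Λ n) z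

/-- The Schur–Nevanlinna coefficients `γ_n = θ_n(λ_n)` of `(Λ, θ)`. -/
def SNcoef (Λ : ℕ → ℂ) (θ : ℂ → ℂ) (n : ℕ) : ℂ := SNfun Λ θ n (Λ n)

/-- The subset `θ·H²` of `H²`. -/
def mulSet (θ : ℂ → ℂ) : Set H2 :=
  {g : H2 | ∃ f : H2, ∀ z ∈ uDisc, H2fun g z = θ z * H2fun f z}

/-- The model space `K_θ = H² ⊖ θH²`. -/
def modelSpace (θ : ℂ → ℂ) : Submodule ℂ H2 := (Submodule.span ℂ (mulSet θ))ᗮ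

instance modelSpace.hasOrthogonalProjection (θ : ℂ → ℂ) :
    HasOrthogonalProjection (modelSpace θ) :=
  haveI : CompleteSpace (modelSpace θ) :=
    (Submodule.isClosed_orthogonal (Submodule.span ℂ (mulSet θ))).completeSpace_coe
  HasOrthogonalProjection.ofCompleteSpace _

/-- The orthogonal projection `P_θ` of `H²` onto the model space `K_θ`,
viewed as a map into `H²`. -/
def Pproj (θ : ℂ → ℂ) (f : H2) : H2 := (orthogonalProjection (modelSpace θ) f : H2)

/-- The element of `H²` whose associated analytic function on the disc is `φ`
(zero if no such element exists; it is unique when it exists). -/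
def pickH2 (φ : ℂ → ℂ) : H2 :=
  if h : ∃ f : H2, ∀ z ∈ uDisc, H2fun f z = φ z then h.choose else 0

/-- The reproducing kernel `k_θ(λ,·) = (1 - conj(θ(λ))·θ(z))/(1 - conj λ · z)` of `K_θ`. -/
def repKernel (θ : ℂ → ℂ) (l : ℂ) : H2 :=
  pickH2 (fun z => (1 - conjC (θ l) * θ z) / (1 - conjC l * z))

/-- The normalized reproducing kernel `k̃_θ(λ,·) = k_θ(λ,·)/‖k_θ(λ,·)‖₂`. -/
def repKernelN (θ : ℂ → ℂ) (l : ℂ) : H2 := ‖repKernel θ l‖⁻¹ • repKernel θ l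

/-- The normalized Szegő kernel `k̃(λ,z) = √(1-|λ|²)/(1 - conj λ · z)`. -/
def szegoN (l : ℂ) : H2 :=
  pickH2 (fun z => (Real.sqrt (1 - ‖l‖ ^ 2) : ℂ) / (1 - conjC l * z))

/-- The Malmquist–Walsh functions `l_n = (∏_{i<n} b_{λ_i}) · k̃(λ_n,·)`. -/
def mwFun (Λ : ℕ → ℂ) (n : ℕ) : H2 :=
  pickH2 (fun z => (∏ i ∈ Finset.range n, blaschkeFactor (Λ i) z) *
    ((Real.sqrt (1 - ‖Λ n‖ ^ 2) : ℂ) / (1 - conjC (Λ n) * z)))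

/-- The function `l_μ(z) = (√(1-|μ|²)/(1 - conj μ · z))·B_Λ(z)`. -/
def lFun (Λ : ℕ → ℂ) (μ : ℂ) : H2 :=
  pickH2 (fun z => ((Real.sqrt (1 - ‖μ‖ ^ 2) : ℂ) / (1 - conjC μ * z)) * blaschkeProd Λ z)

/-- The closed linear hull of a set in `H²`. -/
def closedSpanSet (S : Set H2) : Set H2 := ((Submodule.span ℂ S).topologicalClosure : Set H2)

/-- A Riesz sequence: some bounded linear operator on the closed linear span, bounded below
(hence invertible onto its image), maps the family to an orthonormal family. -/
def IsRieszSeq {E : Type*} [NormedAddCommGroup E] [InnerProductSpace ℂ E] (x : ℕ → E) : Prop :=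
  ∃ V : ((Submodule.span ℂ (Set.range x)).topologicalClosure : Submodule ℂ E) →L[ℂ] E,
    (∃ c : ℝ, 0 < c ∧ ∀ y, c * ‖y‖ ≤ ‖V y‖) ∧
    Orthonormal ℂ (fun n => V ⟨x n,
      Submodule.le_topologicalClosure _ (Submodule.subset_span (Set.mem_range_self n))⟩)

/-- A Riesz basis in a (closed) subspace `K`: a Riesz sequence whose closed linear span is `K`. -/
def IsRieszBasisIn {E : Type*} [NormedAddCommGroup E] [InnerProductSpace ℂ E]
    (x : ℕ → E) (K : Submodule ℂ E) : Prop :=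
  IsRieszSeq x ∧ (Submodule.span ℂ (Set.range x)).topologicalClosure = K

/-- A minimal family: each member lies outside the closed linear span of the others. -/
def MinimalFam {E : Type*} [NormedAddCommGroup E] [InnerProductSpace ℂ E] (x : ℕ → E) : Prop :=
  ∀ n, x n ∉ (Submodule.span ℂ (x '' {k | k ≠ n})).topologicalClosure

/-- A uniformly minimal family. -/
def UnifMinimalFam {E : Type*} [NormedAddCommGroup E] [InnerProductSpace ℂ E]
    (x : ℕ → E) : Prop :=
  ∃ δ : ℝ, 0 < δ ∧ ∀ n, δ ≤
    Metric.infDist (‖x n‖⁻¹ • x n)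
      ((Submodule.span ℂ (x '' {k | k ≠ n})).topologicalClosure : Set E)


/-- If a Riesz sequence admits an orthogonalizer of the form
unitary + compact, then `‖x_n‖ → 1`. -/
theorem statement12 {H : Type*} [NormedAddCommGroup H] [InnerProductSpace ℂ H]
    [CompleteSpace H] (x : ℕ → H) (S : Submodule ℂ H)
    (hS : S = (Submodule.span ℂ (Set.range x)).topologicalClosure)
    (hx : ∀ n, x n ∈ S)
    (V W U K : S →L[ℂ] S)
    (hWV : W.comp V = ContinuousLinearMap.id ℂ S)
    (hVW : V.comp W = ContinuousLinearMap.id ℂ S)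
    (hON : Orthonormal ℂ (fun n => V ⟨x n, hx n⟩))
    (hU : Isometry U) (hUsurj : Function.Surjective U)
    (hK : IsCompactOperator K) (hV : V = U + K) :
    Tendsto (fun n => ‖x n‖) atTop (𝓝 1) := by
  haveI : CompleteSpace S := by
    rw [hS]
    exact (Submodule.isClosed_topologicalClosure _).completeSpace_coe
  set x' : ℕ → S := fun n => ⟨x n, hx n⟩ with hx'def
  set e : ℕ → S := fun n => V (x' n) with hedef
  have hWV' : ∀ y : S, W (V y) = y := fun y => by
    have := congrArg (fun T : S →L[ℂ] S => T y) hWV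
    simpa using this
  have hWe : ∀ n, W (e n) = x' n := fun n => hWV' (x' n)
  have he1 : ∀ n, ‖e n‖ = 1 := fun n => hON.1 n
  -- Weak convergence of `e n` to 0
  have hweak : ∀ z : S, Tendsto (fun n => (inner ℂ (e n) z : ℂ)) atTop (𝓝 0) := by
    intro z
    have hsum : Summable fun n => ‖(inner ℂ (e n) z : ℂ)‖ ^ 2 :=
      hON.inner_products_summable z
    have h0 : Tendsto (fun n => ‖(inner ℂ (e n) z : ℂ)‖ ^ 2) atTop (𝓝 0) :=
      hsum.tendsto_atTop_zero
    have h1 : Tendsto (fun n => ‖(inner ℂ (e n) z : ℂ)‖) atTop (𝓝 0) := by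
      have := (Real.continuous_sqrt.tendsto 0).comp h0
      simp only [Function.comp_def, Real.sqrt_zero] at this
      convert this using 2 with n
      exact (Real.sqrt_sq (norm_nonneg _)).symm
    exact tendsto_zero_iff_norm_tendsto_zero.mpr h1
  -- Weak convergence of `x' n` to 0
  have hweakx : ∀ z : S, Tendsto (fun n => (inner ℂ (x' n) z : ℂ)) atTop (𝓝 0) := by
    intro z
    have : ∀ n, (inner ℂ (x' n) z : ℂ) = inner ℂ (e n) (ContinuousLinearMap.adjoint W z) := by
      intro n
      rw [ContinuousLinearMap.adjoint_inner_right, hWe]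
    simpa [this] using hweak (ContinuousLinearMap.adjoint W z)
  -- The sequence `x'` is bounded
  have hbdd : ∀ n, x' n ∈ Metric.closedBall (0 : S) ‖W‖ := by
    intro n
    rw [Metric.mem_closedBall, dist_zero_right, ← hWe n]
    calc ‖W (e n)‖ ≤ ‖W‖ * ‖e n‖ := W.le_opNorm _
      _ = ‖W‖ := by rw [he1 n, mul_one]
  -- `K (x' n)` lies in a compact set
  obtain ⟨C, hCcomp, hCsub⟩ :=
    hK.image_subset_compact_of_bounded (f := (K : S →ₗ[ℂ] S))
      (Metric.isBounded_closedBall (x := (0 : S)) (r := ‖W‖))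
  have hmem : ∀ n, K (x' n) ∈ C := fun n =>
    hCsub ⟨x' n, hbdd n, rfl⟩
  -- `K (x' n)` converges weakly to 0
  have hweakK : ∀ z : S, Tendsto (fun n => (inner ℂ (K (x' n)) z : ℂ)) atTop (𝓝 0) := by
    intro z
    have : ∀ n, (inner ℂ (K (x' n)) z : ℂ) = inner ℂ (x' n) (ContinuousLinearMap.adjoint K z) := by
      intro n
      rw [ContinuousLinearMap.adjoint_inner_right]
    simpa [this] using hweakx (ContinuousLinearMap.adjoint K z)
  -- `K (x' n)` converges to 0 in norm
  have hKx : Tendsto (fun n => K (x' n)) atTop (𝓝 (0 : S)) := by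
    refine tendsto_of_subseq_tendsto fun ns hns => ?_
    obtain ⟨a, haC, φ, hφ, hconv⟩ :=
      hCcomp.tendsto_subseq (x := fun k => K (x' (ns k))) (fun k => hmem _)
    have ha0 : a = (0 : S) := by
      refine ext_inner_right ℂ fun z => ?_
      have hlim1 : Tendsto (fun k => (inner ℂ (K (x' (ns (φ k)))) z : ℂ)) atTop
          (𝓝 (inner ℂ a z)) := hconv.inner tendsto_const_nhds
      have hlim2 : Tendsto (fun k => (inner ℂ (K (x' (ns (φ k)))) z : ℂ)) atTop (𝓝 0) :=
        (hweakK z).comp (hns.comp hφ.tendsto_atTop)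
      have := tendsto_nhds_unique hlim1 hlim2
      simpa using this
    exact ⟨φ, ha0 ▸ hconv⟩
  -- Conclude
  have hUnorm : ∀ y : S, ‖U y‖ = ‖y‖ := fun y =>
    hU.norm_map_of_map_zero (map_zero U) y
  have hbound : ∀ n, ‖(‖x n‖ - 1 : ℝ)‖ ≤ ‖K (x' n)‖ := by
    intro n
    have hxn : ‖x n‖ = ‖x' n‖ := rfl
    have hUe : U (x' n) - e n = -(K (x' n)) := by
      have : e n = U (x' n) + K (x' n) := by
        rw [hedef]
        simp [hV]
      rw [this]; abel
    calc ‖(‖x n‖ - 1 : ℝ)‖ = |‖U (x' n)‖ - ‖e n‖| := by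
          rw [Real.norm_eq_abs, hxn, ← hUnorm (x' n), he1 n]
      _ ≤ ‖U (x' n) - e n‖ := abs_norm_sub_norm_le _ _
      _ = ‖K (x' n)‖ := by rw [hUe, norm_neg]
  have hsub : Tendsto (fun n => (‖x n‖ - 1 : ℝ)) atTop (𝓝 0) :=
    squeeze_zero_norm hbound (tendsto_zero_iff_norm_tendsto_zero.mp hKx)
  have := hsub.add (tendsto_const_nhds (x := (1 : ℝ)))
  simpa using this

end
end

section
/- Let X = {x_n}_{n≥1} be a Riesz sequence in a Hilbert space H admitting an orthogonalizer of the form U + K with U unitary and K compact. Then lim_{n→∞} dist(x_n, span{x_k : k ≠ n}) = 1. -/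
noncomputable section

open Complex Metric Set Filter Submodule Finset MeasureTheory
open scoped InnerProductSpace ENNReal Topology Classical

section AuxStatement13

variable {E : Type*} [NormedAddCommGroup E] [InnerProductSpace ℂ E]

lemma aux13_le_infDist {X : Type*} [MetricSpace X] {s : Set X} {p : X} {d : ℝ}
    (hs : s.Nonempty) (h : ∀ y ∈ s, d ≤ dist p y) : d ≤ Metric.infDist p s := by
  by_contra hlt
  push_neg at hlt
  obtain ⟨y, hy, hdy⟩ := (Metric.infDist_lt_iff hs).1 hlt
  exact absurd hdy (not_lt.2 (h y hy))

lemma aux13_compact_tendsto [CompleteSpace E] (T : E →L[ℂ] E) (hT : IsCompactOperator T)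
    (y : ℕ → E) (c : ℝ) (hb : ∀ n, ‖y n‖ ≤ c)
    (hw : ∀ w : E, Tendsto (fun n => (inner ℂ (y n) w : ℂ)) atTop (𝓝 0)) :
    Tendsto (fun n => T (y n)) atTop (𝓝 0) := by
  obtain ⟨C, hCcomp, hCnhds⟩ := hT
  obtain ⟨r, hr, hball⟩ := Metric.mem_nhds_iff.1 hCnhds
  have hc0 : 0 ≤ c := le_trans (norm_nonneg _) (hb 0)
  set a : ℝ := r / (2 * (c + 1)) with ha
  have ha0 : 0 < a := by positivity
  have hmem : ∀ n, T ((a : ℂ) • y n) ∈ C := by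
    intro n
    apply hball
    rw [Metric.mem_ball, dist_zero_right, norm_smul]
    have h1 : ‖(a : ℂ)‖ = a := by
      rw [Complex.norm_real, Real.norm_of_nonneg ha0.le]
    have h2 : a * (c + 1) = r / 2 := by
      rw [ha]; field_simp
    calc ‖(a : ℂ)‖ * ‖y n‖ ≤ a * (c + 1) := by
          rw [h1]
          exact mul_le_mul_of_nonneg_left ((hb n).trans (by linarith)) ha0.le
      _ = r / 2 := h2
      _ < r := by linarith
  have key : Tendsto (fun n => T ((a : ℂ) • y n)) atTop (𝓝 0) := by
    apply tendsto_of_subseq_tendsto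
    intro ns hns
    obtain ⟨w, _hwC, φ, hφ, hφt⟩ :=
      hCcomp.tendsto_subseq (x := fun n => T ((a : ℂ) • y (ns n))) (fun n => hmem (ns n))
    refine ⟨φ, ?_⟩
    have hw0 : w = 0 := by
      have hinner : ∀ v : E, (inner ℂ w v : ℂ) = 0 := by
        intro v
        have t1 : Tendsto (fun i => (inner ℂ (T ((a : ℂ) • y (ns (φ i)))) v : ℂ)) atTop
            (𝓝 (inner ℂ w v)) :=
          hφt.inner tendsto_const_nhds
        have t2 : Tendsto (fun i => (inner ℂ (T ((a : ℂ) • y (ns (φ i)))) v : ℂ)) atTop (𝓝 0) := by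
          have heq : ∀ m : ℕ, (inner ℂ (T ((a : ℂ) • y m)) v : ℂ) =
              (starRingEnd ℂ) (a : ℂ) * inner ℂ (y m) ((ContinuousLinearMap.adjoint T) v) := by
            intro m
            rw [← ContinuousLinearMap.adjoint_inner_right T ((a : ℂ) • y m) v,
              inner_smul_left]
          simp only [heq]
          have t3 : Tendsto (fun i => (inner ℂ (y (ns (φ i)))
              ((ContinuousLinearMap.adjoint T) v) : ℂ)) atTop (𝓝 0) :=
            (hw ((ContinuousLinearMap.adjoint T) v)).comp (hns.comp hφ.tendsto_atTop)
          simpa using t3.const_mul ((starRingEnd ℂ) (a : ℂ))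
        exact tendsto_nhds_unique t1 t2
      have := hinner w
      rwa [inner_self_eq_zero] at this
    rw [hw0] at hφt
    exact hφt
  have hfin : Tendsto (fun n => ((a : ℂ)⁻¹) • T ((a : ℂ) • y n)) atTop (𝓝 0) := by
    simpa using key.const_smul ((a : ℂ)⁻¹)
  have heq : ∀ n, ((a : ℂ)⁻¹) • T ((a : ℂ) • y n) = T (y n) := by
    intro n
    rw [T.map_smul, smul_smul, inv_mul_cancel₀ (by exact_mod_cast ha0.ne'), one_smul]
  simpa only [heq] using hfin

end AuxStatement13

/-- If a Riesz sequence admits an orthogonalizer of the form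
unitary + compact, then `dist(x_n, span{x_k : k ≠ n}) → 1`. -/
theorem statement13 {H : Type*} [NormedAddCommGroup H] [InnerProductSpace ℂ H]
    [CompleteSpace H] (x : ℕ → H) (S : Submodule ℂ H)
    (hS : S = (Submodule.span ℂ (Set.range x)).topologicalClosure)
    (hx : ∀ n, x n ∈ S)
    (V W U K : S →L[ℂ] S)
    (hWV : W.comp V = ContinuousLinearMap.id ℂ S)
    (hVW : V.comp W = ContinuousLinearMap.id ℂ S)
    (hON : Orthonormal ℂ (fun n => V ⟨x n, hx n⟩))
    (hU : Isometry U) (hUsurj : Function.Surjective U)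
    (hK : IsCompactOperator K) (hV : V = U + K) :
    Tendsto (fun n => Metric.infDist (x n)
      ((Submodule.span ℂ (x '' {k | k ≠ n})).topologicalClosure : Set H)) atTop (𝓝 1) := by
  haveI hScomplete : CompleteSpace S := by
    have hclosed : IsClosed (S : Set H) := by
      rw [hS]; exact Submodule.isClosed_topologicalClosure _
    exact hclosed.completeSpace_coe
  classical
  -- notation
  set xt : ℕ → S := fun n => ⟨x n, hx n⟩ with hxt
  set e : ℕ → S := fun n => V (xt n) with he
  have hONe : Orthonormal ℂ e := hON
  have henorm : ∀ n, ‖e n‖ = 1 := fun n => hONe.1 n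
  have hWe : ∀ n, W (e n) = xt n := by
    intro n
    have h1 := ContinuousLinearMap.ext_iff.1 hWV (xt n)
    simpa using h1
  -- adjoints
  set Ua : S →L[ℂ] S := ContinuousLinearMap.adjoint U with hUa
  set Ka : S →L[ℂ] S := ContinuousLinearMap.adjoint K with hKa
  set xp : ℕ → S := fun n => (ContinuousLinearMap.adjoint V) (e n) with hxp
  -- U is a linear isometry
  have hUnorm : ∀ z : S, ‖U z‖ = ‖z‖ := by
    intro z
    have := hU.dist_eq z 0
    simpa [map_zero] using this
  have hUinner : ∀ a b : S, (inner ℂ (U a) (U b) : ℂ) = inner ℂ a b := by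
    intro a b
    let Ui : S →ₗᵢ[ℂ] S := ⟨(U : S →ₗ[ℂ] S), hUnorm⟩
    exact Ui.inner_map_map a b
  have hUadj : ∀ z : S, Ua (U z) = z := by
    intro z
    refine ext_inner_left ℂ fun v => ?_
    rw [hUa, ContinuousLinearMap.adjoint_inner_right, hUinner]
  have hUUadj : ∀ z : S, U (Ua z) = z := by
    intro z
    obtain ⟨a, rfl⟩ := hUsurj z
    rw [hUadj]
  have hUanorm : ∀ z : S, ‖Ua z‖ = ‖z‖ := by
    intro z
    rw [← hUnorm (Ua z), hUUadj]
  -- weak convergence to zero of the orthonormal sequence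
  have heweak : ∀ w : S, Tendsto (fun n => (inner ℂ (e n) w : ℂ)) atTop (𝓝 0) := by
    intro w
    have hsum : Summable fun n => ‖(inner ℂ (e n) w : ℂ)‖ ^ 2 :=
      hONe.inner_products_summable w
    have h0 : Tendsto (fun n => ‖(inner ℂ (e n) w : ℂ)‖ ^ 2) atTop (𝓝 0) :=
      hsum.tendsto_atTop_zero
    have h2 := (Real.continuous_sqrt.tendsto 0).comp h0
    have h3 : (fun n => ‖(inner ℂ (e n) w : ℂ)‖) =
        fun n => Real.sqrt (‖(inner ℂ (e n) w : ℂ)‖ ^ 2) := by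
      funext n; rw [Real.sqrt_sq (norm_nonneg _)]
    have h1 : Tendsto (fun n => ‖(inner ℂ (e n) w : ℂ)‖) atTop (𝓝 0) := by
      rw [h3]
      simpa [Function.comp_def] using h2
    exact tendsto_zero_iff_norm_tendsto_zero.2 h1
  -- x n = W e n is weakly null
  have hxtweak : ∀ w : S, Tendsto (fun n => (inner ℂ (xt n) w : ℂ)) atTop (𝓝 0) := by
    intro w
    have h1 := heweak ((ContinuousLinearMap.adjoint W) w)
    have h2 : ∀ n, (inner ℂ (xt n) w : ℂ) =
        inner ℂ (e n) ((ContinuousLinearMap.adjoint W) w) := by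
      intro n
      rw [← hWe n, ContinuousLinearMap.adjoint_inner_right]
    simpa only [h2] using h1
  have hxtb : ∀ n, ‖xt n‖ ≤ ‖W‖ := by
    intro n
    calc ‖xt n‖ = ‖W (e n)‖ := by rw [hWe]
      _ ≤ ‖W‖ * ‖e n‖ := W.le_opNorm _
      _ = ‖W‖ := by rw [henorm, mul_one]
  have hKxt : Tendsto (fun n => K (xt n)) atTop (𝓝 0) :=
    aux13_compact_tendsto K hK xt ‖W‖ hxtb hxtweak
  -- decomposition of xt
  have hVxt : ∀ n, U (xt n) + K (xt n) = e n := by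
    intro n
    rw [he]
    simp only [hV, ContinuousLinearMap.add_apply]
  have hxteq : ∀ n, xt n = Ua (e n) - Ua (K (xt n)) := by
    intro n
    have h1 : U (xt n) = e n - K (xt n) := by
      rw [eq_sub_iff_add_eq]; exact hVxt n
    calc xt n = Ua (U (xt n)) := (hUadj _).symm
      _ = Ua (e n - K (xt n)) := by rw [h1]
      _ = Ua (e n) - Ua (K (xt n)) := map_sub _ _ _
  -- ‖xt n‖ → 1
  have hxtnorm : Tendsto (fun n => ‖xt n‖) atTop (𝓝 1) := by
    have hbound : ∀ n, |‖xt n‖ - 1| ≤ ‖K (xt n)‖ := by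
      intro n
      have h1 : ‖Ua (e n)‖ = 1 := by rw [hUanorm, henorm]
      calc |‖xt n‖ - 1| = |‖xt n‖ - ‖Ua (e n)‖| := by rw [h1]
        _ ≤ ‖xt n - Ua (e n)‖ := abs_norm_sub_norm_le _ _
        _ = ‖Ua (K (xt n))‖ := by
            conv_lhs => rw [hxteq n]
            rw [sub_sub_cancel_left, norm_neg]
        _ = ‖K (xt n)‖ := hUanorm _
    have h0 : Tendsto (fun n => |‖xt n‖ - 1|) atTop (𝓝 0) :=
      squeeze_zero (fun n => abs_nonneg _) hbound
        (tendsto_zero_iff_norm_tendsto_zero.mp hKxt)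
    rw [tendsto_iff_dist_tendsto_zero]
    simpa [Real.dist_eq] using h0
  -- ‖Ka (e n)‖ → 0
  have hKaweak : ∀ w : S, Tendsto (fun n => (inner ℂ (Ka (e n)) w : ℂ)) atTop (𝓝 0) := by
    intro w
    have h1 := heweak (K w)
    have h2 : ∀ n, (inner ℂ (Ka (e n)) w : ℂ) = inner ℂ (e n) (K w) := by
      intro n
      rw [hKa, ContinuousLinearMap.adjoint_inner_left]
    simpa only [h2] using h1
  have hKab : ∀ n, ‖Ka (e n)‖ ≤ ‖Ka‖ := by
    intro n
    calc ‖Ka (e n)‖ ≤ ‖Ka‖ * ‖e n‖ := Ka.le_opNorm _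
      _ = ‖Ka‖ := by rw [henorm, mul_one]
  have hKKa : Tendsto (fun n => K (Ka (e n))) atTop (𝓝 0) :=
    aux13_compact_tendsto K hK (fun n => Ka (e n)) ‖Ka‖ hKab hKaweak
  have hKa0 : Tendsto (fun n => ‖Ka (e n)‖) atTop (𝓝 0) := by
    have hsq : ∀ n, ‖Ka (e n)‖ ≤ Real.sqrt ‖K (Ka (e n))‖ := by
      intro n
      rw [Real.le_sqrt (norm_nonneg _) (norm_nonneg _)]
      calc ‖Ka (e n)‖ ^ 2 = ‖(inner ℂ (Ka (e n)) (Ka (e n)) : ℂ)‖ := by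
            rw [inner_self_eq_norm_sq_to_K]
            simp [Complex.norm_real]
        _ = ‖(inner ℂ (e n) (K (Ka (e n))) : ℂ)‖ := by
            rw [hKa, ContinuousLinearMap.adjoint_inner_left]
        _ ≤ ‖e n‖ * ‖K (Ka (e n))‖ := norm_inner_le_norm _ _
        _ = ‖K (Ka (e n))‖ := by rw [henorm, one_mul]
    have h2 : Tendsto (fun n => Real.sqrt ‖K (Ka (e n))‖) atTop (𝓝 0) := by
      have := (Real.continuous_sqrt.tendsto 0).comp
        (tendsto_zero_iff_norm_tendsto_zero.mp hKKa)
      simpa [Function.comp_def] using this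
    exact squeeze_zero (fun n => norm_nonneg _) hsq h2
  -- ‖xp n‖ → 1
  have hxpeq : ∀ n, xp n = Ua (e n) + Ka (e n) := by
    intro n
    rw [hxp]
    simp only [hV, map_add, ContinuousLinearMap.add_apply, hUa, hKa]
  have hxpnorm : Tendsto (fun n => ‖xp n‖) atTop (𝓝 1) := by
    have hbound : ∀ n, |‖xp n‖ - 1| ≤ ‖Ka (e n)‖ := by
      intro n
      have h1 : ‖Ua (e n)‖ = 1 := by rw [hUanorm, henorm]
      calc |‖xp n‖ - 1| = |‖xp n‖ - ‖Ua (e n)‖| := by rw [h1]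
        _ ≤ ‖xp n - Ua (e n)‖ := abs_norm_sub_norm_le _ _
        _ = ‖Ka (e n)‖ := by rw [hxpeq n, add_sub_cancel_left]
    have h0 : Tendsto (fun n => |‖xp n‖ - 1|) atTop (𝓝 0) :=
      squeeze_zero (fun n => abs_nonneg _) hbound hKa0
    rw [tendsto_iff_dist_tendsto_zero]
    simpa [Real.dist_eq] using h0
  -- biorthogonality
  have hbio : ∀ k n : ℕ, (inner ℂ (xt k) (xp n) : ℂ) = if k = n then 1 else 0 := by
    intro k n
    rw [hxp]
    rw [ContinuousLinearMap.adjoint_inner_right]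
    exact orthonormal_iff_ite.mp hONe k n
  have hbioH : ∀ k n : ℕ, (inner ℂ ((xp n : H)) (x k) : ℂ) = if k = n then 1 else 0 := by
    intro k n
    have h1 : (inner ℂ ((xp n : H)) ((xt k : H)) : ℂ) = inner ℂ (xp n) (xt k) :=
      (Submodule.coe_inner S (xp n) (xt k)).symm
    have h2 : ((xt k : H)) = x k := rfl
    rw [← h2, h1, ← inner_conj_symm, hbio k n]
    split <;> simp
  -- xp n is orthogonal to the span of the others
  have hperp : ∀ n : ℕ, ∀ z ∈ ((Submodule.span ℂ (x '' {k | k ≠ n})).topologicalClosure : Set H),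
      (inner ℂ ((xp n : H)) z : ℂ) = 0 := by
    intro n z hz
    have hker : (Submodule.span ℂ (x '' {k | k ≠ n})).topologicalClosure ≤
        LinearMap.ker ((innerSL ℂ ((xp n : H)) : H →ₗ[ℂ] ℂ)) := by
      apply Submodule.topologicalClosure_minimal
      · rw [Submodule.span_le]
        rintro v ⟨k, hk, rfl⟩
        simp only [SetLike.mem_coe, LinearMap.mem_ker, ContinuousLinearMap.coe_coe,
          innerSL_apply_apply]
        rw [hbioH k n, if_neg hk]
      · exact ContinuousLinearMap.isClosed_ker _
    have := hker hz
    simpa using this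
  -- positivity of ‖xp n‖
  have hxppos : ∀ n, 0 < ‖(xp n : H)‖ := by
    intro n
    rw [norm_pos_iff]
    intro h0
    have h1 := hbioH n n
    rw [if_pos rfl] at h1
    rw [h0] at h1
    simp at h1
  -- lower bound
  have hlow : ∀ n, (‖(xp n : H)‖)⁻¹ ≤ Metric.infDist (x n)
      ((Submodule.span ℂ (x '' {k | k ≠ n})).topologicalClosure : Set H) := by
    intro n
    apply aux13_le_infDist ⟨0, Submodule.zero_mem _⟩
    intro y hy
    have h1 : (inner ℂ ((xp n : H)) (x n - y) : ℂ) = 1 := by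
      rw [inner_sub_right, hperp n y hy, sub_zero, hbioH n n, if_pos rfl]
    have h2 : (1 : ℝ) ≤ ‖(xp n : H)‖ * ‖x n - y‖ := by
      calc (1 : ℝ) = ‖(inner ℂ ((xp n : H)) (x n - y) : ℂ)‖ := by rw [h1]; simp
        _ ≤ ‖(xp n : H)‖ * ‖x n - y‖ := norm_inner_le_norm _ _
    rw [dist_eq_norm]
    have h3 := mul_le_mul_of_nonneg_left h2 (inv_nonneg.2 (hxppos n).le)
    rwa [mul_one, ← mul_assoc, inv_mul_cancel₀ (hxppos n).ne', one_mul] at h3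
  -- upper bound
  have hup : ∀ n, Metric.infDist (x n)
      ((Submodule.span ℂ (x '' {k | k ≠ n})).topologicalClosure : Set H) ≤ ‖xt n‖ := by
    intro n
    have h0 : (0 : H) ∈ ((Submodule.span ℂ (x '' {k | k ≠ n})).topologicalClosure : Set H) :=
      Submodule.zero_mem _
    calc Metric.infDist (x n) _ ≤ dist (x n) 0 := Metric.infDist_le_dist_of_mem h0
      _ = ‖x n‖ := by rw [dist_zero_right]
      _ = ‖xt n‖ := rfl
  -- conclusion by squeezing
  have hcoenorm : ∀ n, ‖(xp n : H)‖ = ‖xp n‖ := fun n => rfl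
  have hlim_low : Tendsto (fun n => (‖(xp n : H)‖)⁻¹) atTop (𝓝 1) := by
    have h1 : Tendsto (fun n => (‖xp n‖)⁻¹) atTop (𝓝 1) := by
      have := hxpnorm.inv₀ one_ne_zero
      simpa using this
    simpa only [hcoenorm] using h1
  exact tendsto_of_tendsto_of_tendsto_of_le_of_le hlim_low hxtnorm hlow hup


end
end
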